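/- Let U take values in a finite alphabet of size L ≥ 2 and Q in a finite alphabet, with joint pmf. Define Z_L(U|Q) = (1/(L-1)) Σ_q Σ_{u ≠ u'} P(q) √(P(u|q)P(u'|q)) and T_L(U|Q) = (1/(2(L-1))) Σ_q Σ_{u ≠ u'} P(q) |P(u|q) - P(u'|q)|. Then Z_L(U|Q)² + T_L(U|Q)² ≤ 1. -/

import Mathlib

open Finset

theorem nonbinary_bhattacharyya_sq_plus_tv_sq_le_one
    {U Q : Type*} [Fintype U] [DecidableEq U] [Fintype Q] (L : ℕ) (hL : 2 ≤ L)
    (hcard : Fintype.card U = L)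
    (p : Q → ℝ) (W : Q → U → ℝ)
    (hp : ∀ q, 0 ≤ p q) (hpsum : ∑ q, p q = 1)
    (hW : ∀ q u, 0 ≤ W q u) (hWsum : ∀ q, ∑ u, W q u = 1) :
    ((1 / ((L : ℝ) - 1)) *
        ∑ q, p q * ∑ u, ∑ u' ∈ Finset.univ.erase u, Real.sqrt (W q u * W q u'))^2 +
      ((1 / (2 * ((L : ℝ) - 1))) *
        ∑ q, p q * ∑ u, ∑ u' ∈ Finset.univ.erase u, |W q u - W q u'|)^2 ≤ 1 := by
  have hL2 : (2:ℝ) ≤ (L:ℝ) := by exact_mod_cast hL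
  have hc : (0:ℝ) < (L:ℝ) - 1 := by linarith
  set c : ℝ := (L:ℝ) - 1 with hcdef
  set g : Q → U → U → ℂ := fun q u u' =>
    ⟨(p q / (2*c)) * (2 * Real.sqrt (W q u * W q u')),
     (p q / (2*c)) * |W q u - W q u'|⟩ with hg
  set S : ℂ := ∑ q, ∑ u, ∑ u' ∈ Finset.univ.erase u, g q u u' with hS
  have hre : S.re = (1 / c) *
      ∑ q, p q * ∑ u, ∑ u' ∈ Finset.univ.erase u, Real.sqrt (W q u * W q u') := by
    simp only [hS, Complex.re_sum, hg, Finset.mul_sum]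
    refine Finset.sum_congr rfl fun q _ => Finset.sum_congr rfl fun u _ =>
      Finset.sum_congr rfl fun u' _ => ?_
    field_simp
  have him : S.im = (1 / (2*c)) *
      ∑ q, p q * ∑ u, ∑ u' ∈ Finset.univ.erase u, |W q u - W q u'| := by
    simp only [hS, Complex.im_sum, hg, Finset.mul_sum]
    refine Finset.sum_congr rfl fun q _ => Finset.sum_congr rfl fun u _ =>
      Finset.sum_congr rfl fun u' _ => ?_
    field_simp
  have hnorm : ∀ q u u', ‖g q u u'‖ = (p q / (2*c)) * (W q u + W q u') := by
    intro q u u'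
    have hpos : 0 ≤ p q / (2*c) := div_nonneg (hp q) (by linarith)
    have hw : 0 ≤ W q u := hW q u
    have hw' : 0 ≤ W q u' := hW q u'
    have hsq : Real.sqrt (W q u * W q u') ^ 2 = W q u * W q u' :=
      Real.sq_sqrt (mul_nonneg hw hw')
    rw [Complex.norm_def]
    have hns : Complex.normSq (g q u u') = ((p q / (2*c)) * (W q u + W q u'))^2 := by
      rw [hg]
      simp only [Complex.normSq_mk]
      have habs : |W q u - W q u'| ^ 2 = (W q u - W q u') ^ 2 := sq_abs _
      linear_combination 4*(p q/(2*c))^2 * hsq + (p q/(2*c))^2 * habs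
    rw [hns, Real.sqrt_sq (mul_nonneg hpos (by linarith))]
  have hsumnorm : ∑ q, ∑ u, ∑ u' ∈ Finset.univ.erase u, ‖g q u u'‖ = 1 := by
    have hcard' : ∀ u : U, ((Finset.univ.erase u).card : ℝ) = c := by
      intro u
      rw [Finset.card_erase_of_mem (Finset.mem_univ u), Finset.card_univ, hcard]
      rw [Nat.cast_sub (by omega)]
      simp [hcdef]
    calc ∑ q, ∑ u, ∑ u' ∈ Finset.univ.erase u, ‖g q u u'‖
        = ∑ q, (p q / (2*c)) * ∑ u, ∑ u' ∈ Finset.univ.erase u, (W q u + W q u') := by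
          simp only [hnorm, Finset.mul_sum]
      _ = ∑ q, (p q / (2*c)) * (2*c) := by
          refine Finset.sum_congr rfl fun q _ => ?_
          congr 1
          have : ∀ u : U, ∑ u' ∈ Finset.univ.erase u, (W q u + W q u')
              = c * W q u + (1 - W q u) := by
            intro u
            rw [Finset.sum_add_distrib, Finset.sum_const, nsmul_eq_mul, hcard' u,
              Finset.sum_erase_eq_sub (Finset.mem_univ u), hWsum q]
          rw [Finset.sum_congr rfl fun u _ => this u]
          rw [Finset.sum_add_distrib, ← Finset.mul_sum, hWsum q]
          have : ∑ u : U, (1 - W q u) = (L:ℝ) - 1 := by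
            rw [Finset.sum_sub_distrib, Finset.sum_const, Finset.card_univ, hcard,
              hWsum q, nsmul_eq_mul, mul_one]
          rw [this]
          ring
      _ = ∑ q, p q := by
          refine Finset.sum_congr rfl fun q _ => ?_
          field_simp
      _ = 1 := hpsum
  have hSnorm : ‖S‖ ≤ 1 := by
    rw [hS, ← hsumnorm]
    refine le_trans (norm_sum_le _ _) (Finset.sum_le_sum fun q _ => ?_)
    refine le_trans (norm_sum_le _ _) (Finset.sum_le_sum fun u _ => ?_)
    exact norm_sum_le _ _
  have key : S.re ^ 2 + S.im ^ 2 ≤ 1 := by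
    have h2 : ‖S‖ ^ 2 = S.re ^ 2 + S.im ^ 2 := by
      rw [Complex.sq_norm, Complex.normSq_apply]
      ring
    rw [← h2]
    calc ‖S‖ ^ 2 ≤ 1 ^ 2 := pow_le_pow_left₀ (norm_nonneg _) hSnorm 2
      _ = 1 := one_pow 2
  rw [← hre, ← him]
  exact key
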